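/- Let A ∈ ℝ^{n×n} be symmetric positive semidefinite, r < n, and suppose J ⊆ {1,…,n} with |J| = r maximizes |det(A(Ĵ,Ĵ))| over all index sets Ĵ ⊆ {1,…,n} with |Ĵ| = r, and A(J,J) is invertible. Then ‖A − A_J‖_max ≤ (r+1)·σ_{r+1}(A). -/

import Mathlib

open Matrix Finset
set_option linter.unusedSectionVars false
set_option maxHeartbeats 1000000


open Matrix Finset

/-- Cross approximation `A_J = A(:,J) A(J,J)⁻¹ A(J,:)` built on the principal submatrix
indexed by the finite index set `J`. -/
noncomputable def crossApprox {n : ℕ} (A : Matrix (Fin n) (Fin n) ℝ) (J : Finset (Fin n)) :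
    Matrix (Fin n) (Fin n) ℝ :=
  A.submatrix id (Subtype.val : J → Fin n) *
    (A.submatrix (Subtype.val : J → Fin n) (Subtype.val : J → Fin n))⁻¹ *
    A.submatrix (Subtype.val : J → Fin n) id

/-- Determinant of the principal submatrix `A(J,J)`. -/
noncomputable def pminor {n : ℕ} (A : Matrix (Fin n) (Fin n) ℝ) (J : Finset (Fin n)) : ℝ :=
  (A.submatrix (Subtype.val : J → Fin n) (Subtype.val : J → Fin n)).det

/-- Nuclear norm: sum of the singular values of `M`, i.e. of the square roots of the
eigenvalues of `Mᴴ M`. -/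
noncomputable def nuclearNorm {n : ℕ} (M : Matrix (Fin n) (Fin n) ℝ) : ℝ :=
  ∑ i, Real.sqrt ((Matrix.isHermitian_conjTranspose_mul_self M).eigenvalues i)

/-- Frobenius norm. -/
noncomputable def frobNorm {n : ℕ} (M : Matrix (Fin n) (Fin n) ℝ) : ℝ :=
  Real.sqrt (∑ i, ∑ j, (M i j) ^ 2)

/-- Spectral norm: the largest singular value. -/
noncomputable def specNorm {n : ℕ} (M : Matrix (Fin n) (Fin n) ℝ) : ℝ :=
  ⨆ i, Real.sqrt ((Matrix.isHermitian_conjTranspose_mul_self M).eigenvalues i)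

/-- Max norm: largest magnitude of an entry. -/
noncomputable def maxNorm {n : ℕ} (M : Matrix (Fin n) (Fin n) ℝ) : ℝ :=
  ⨆ i, ⨆ j, |M i j|

/-- The tuple `f` sorted in nonincreasing order. -/
noncomputable def sortedDesc {m : ℕ} (f : Fin m → ℝ) : Fin m → ℝ :=
  fun i => -(((fun j => -f j) ∘ Tuple.sort fun j => -f j) i)

/-- `Esum M k` is the sum of all `k × k` principal minors of `M`. -/
noncomputable def Esum {n : ℕ} (M : Matrix (Fin n) (Fin n) ℝ) (k : ℕ) : ℝ :=
  ∑ K ∈ Finset.powersetCard k (Finset.univ : Finset (Fin n)), pminor M K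


section aux
variable {m : Type*} [Fintype m] [DecidableEq m]

lemma vecMul_eq_star_mulVec (U : Matrix m m ℝ) (x : m → ℝ) :
    x ᵥ* U = star U *ᵥ x := by
  ext j
  simp [vecMul, mulVec, dotProduct, star_apply, mul_comm]

lemma quad_key {M : Matrix m m ℝ} (hM : M.IsHermitian) (x : m → ℝ) :
    x ⬝ᵥ (M *ᵥ x)
        = ∑ i, hM.eigenvalues i * ((star (hM.eigenvectorUnitary : Matrix m m ℝ) *ᵥ x) i) ^ 2 ∧
      x ⬝ᵥ x = ∑ i, ((star (hM.eigenvectorUnitary : Matrix m m ℝ) *ᵥ x) i) ^ 2 := by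
  set U := (hM.eigenvectorUnitary : Matrix m m ℝ) with hU
  obtain ⟨hU1, hU2⟩ := Unitary.mem_iff.mp hM.eigenvectorUnitary.2
  rw [← hU] at hU1 hU2
  set c := star U *ᵥ x with hc
  have hdc : ∀ w : m → ℝ, x ⬝ᵥ (U *ᵥ w) = c ⬝ᵥ w := by
    intro w
    rw [dotProduct_mulVec, vecMul_eq_star_mulVec]
  have hD : Matrix.diagonal (RCLike.ofReal ∘ hM.eigenvalues) = Matrix.diagonal hM.eigenvalues := by
    ext i j; simp [Matrix.diagonal]
  constructor
  · conv_lhs => rw [hM.spectral_theorem, Unitary.conjStarAlgAut_apply]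
    rw [hD, ← hU, mul_assoc, ← mulVec_mulVec, hdc, ← mulVec_mulVec]
    simp [dotProduct, mulVec_diagonal, mul_comm, mul_assoc, sq, mul_left_comm]
    rfl
  · have h2 : c ⬝ᵥ c = x ⬝ᵥ x := by
      conv_lhs => rw [hc, dotProduct_mulVec, vecMul_eq_star_mulVec, star_star, mulVec_mulVec, hU2, one_mulVec]
    rw [← h2]; simp [dotProduct, sq]
  
lemma quad_lower {M : Matrix m m ℝ} (hM : M.IsHermitian) (x : m → ℝ) (a : ℝ)
    (ha : ∀ i, a ≤ hM.eigenvalues i) : a * (x ⬝ᵥ x) ≤ x ⬝ᵥ (M *ᵥ x) := by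
  obtain ⟨h1, h2⟩ := quad_key hM x
  rw [h1, h2, Finset.mul_sum]
  exact Finset.sum_le_sum fun i _ => mul_le_mul_of_nonneg_right (ha i) (sq_nonneg _)

lemma quad_upper {M : Matrix m m ℝ} (hM : M.IsHermitian) (x : m → ℝ) (d : ℝ) (T : Finset m)
    (hT : ∀ t ∈ T, (star (hM.eigenvectorUnitary : Matrix m m ℝ) *ᵥ x) t = 0)
    (hd : ∀ i ∉ T, hM.eigenvalues i ≤ d) : x ⬝ᵥ (M *ᵥ x) ≤ d * (x ⬝ᵥ x) := by
  obtain ⟨h1, h2⟩ := quad_key hM x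
  rw [h1, h2, Finset.mul_sum]
  refine Finset.sum_le_sum fun i _ => ?_
  by_cases hi : i ∈ T
  · rw [hT i hi]; simp
  · exact mul_le_mul_of_nonneg_right (hd i hi) (sq_nonneg _)

lemma trace_inv_herm {M : Matrix m m ℝ} (hM : M.IsHermitian)
    (hv : ∀ i, hM.eigenvalues i ≠ 0) :
    M⁻¹.trace = ∑ i, (hM.eigenvalues i)⁻¹ := by
  set U := (hM.eigenvectorUnitary : Matrix m m ℝ) with hU
  obtain ⟨hU1, hU2⟩ := Unitary.mem_iff.mp hM.eigenvectorUnitary.2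
  rw [← hU] at hU1 hU2
  have hD : Matrix.diagonal (RCLike.ofReal ∘ hM.eigenvalues) = Matrix.diagonal hM.eigenvalues := by
    ext i j; simp [Matrix.diagonal]
  have hUi : U⁻¹ = star U := Matrix.inv_eq_left_inv hU1
  have hUsi : (star U)⁻¹ = U := Matrix.inv_eq_left_inv hU2
  conv_lhs => rw [hM.spectral_theorem, Unitary.conjStarAlgAut_apply, hD, ← hU]
  rw [Matrix.mul_inv_rev, Matrix.mul_inv_rev, hUi, hUsi, Matrix.inv_diagonal,
    ← mul_assoc, Matrix.trace_mul_comm, ← mul_assoc, hU1, one_mul, Matrix.trace_diagonal]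
  have hvu : IsUnit hM.eigenvalues :=
    IsUnit.of_mul_eq_one (fun i => (hM.eigenvalues i)⁻¹)
      (funext fun i => mul_inv_cancel₀ (hv i))
  have hmul := Ring.mul_inverse_cancel _ hvu
  refine Finset.sum_congr rfl fun i _ => ?_
  have h2 := congr_fun hmul i
  simpa using (inv_eq_of_mul_eq_one_right h2).symm

end aux

section aux2
variable {m : Type*} [Fintype m] [DecidableEq m]

/-- Split `m` as the distinguished element `j` plus the rest. -/
def jsplit (j : m) : Unit ⊕ {x : m // x ≠ j} ≃ m where
  toFun := Sum.elim (fun _ => j) Subtype.val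
  invFun x := if h : x = j then Sum.inl () else Sum.inr ⟨x, h⟩
  left_inv := by
    rintro (⟨⟩ | ⟨x, hx⟩)
    · simp
    · simp [hx]
  right_inv x := by by_cases h : x = j <;> simp [h]

lemma adjugate_diag (M : Matrix m m ℝ) (j : m) :
    M.adjugate j j = (M.submatrix (Subtype.val : {x : m // x ≠ j} → m) Subtype.val).det := by
  rw [Matrix.adjugate_apply, ← Matrix.det_submatrix_equiv_self (jsplit j)]
  have : (M.updateRow j (Pi.single j 1)).submatrix (jsplit j) (jsplit j) =
      Matrix.fromBlocks (1 : Matrix Unit Unit ℝ) 0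
        (Matrix.of fun (y : {x : m // x ≠ j}) (_ : Unit) => M y.val j)
        (M.submatrix Subtype.val Subtype.val) := by
    ext a b
    rcases a with a | ⟨a, ha⟩
    · rcases b with b | ⟨b, hb⟩
      · simp [jsplit, Matrix.updateRow_apply, Pi.single_apply]
      · simp [jsplit, Matrix.updateRow_apply, Pi.single_apply, Ne.symm hb]
    · rcases b with b | ⟨b, hb⟩
      · simp [jsplit, Matrix.updateRow_apply, ha]
      · simp [jsplit, Matrix.updateRow_apply, ha]
  rw [this, Matrix.det_fromBlocks_zero₁₂]
  simp

lemma exists_kernel_vec {α β : Type*} [Fintype α] [Fintype β] (M : Matrix α β ℝ)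
    (h : Fintype.card α < Fintype.card β) : ∃ y : β → ℝ, y ≠ 0 ∧ M *ᵥ y = 0 := by
  have hni : ¬ Function.Injective M.mulVecLin := by
    intro hinj
    have := LinearMap.finrank_le_finrank_of_injective hinj
    rw [Module.finrank_pi, Module.finrank_pi] at this
    omega
  rw [← LinearMap.ker_eq_bot] at hni
  obtain ⟨y, hy, hy0⟩ := Submodule.exists_mem_ne_zero_of_ne_bot hni
  exact ⟨y, hy0, hy⟩

lemma sum_mul_restrict {α : Type*} [Fintype α] [DecidableEq α] (s : Finset α) (y : ↥s → ℝ)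
    (w : α → ℝ) :
    ∑ a, w a * (if h : a ∈ s then y ⟨a, h⟩ else 0) = ∑ k : ↥s, w k.1 * y k :=
  calc ∑ a, w a * (if h : a ∈ s then y ⟨a, h⟩ else 0)
      = ∑ a ∈ s, w a * (if h : a ∈ s then y ⟨a, h⟩ else 0) :=
        (Finset.sum_subset (Finset.subset_univ s) (by intro a _ ha; simp [ha])).symm
    _ = ∑ k : ↥s, w k.1 * (if h : k.1 ∈ s then y ⟨k.1, h⟩ else 0) :=
        (Finset.sum_coe_sort s _).symm
    _ = ∑ k : ↥s, w k.1 * y k := Finset.sum_congr rfl fun k _ => by simp [k.2]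

end aux2

section aux3
variable {m : Type*} [Fintype m] [DecidableEq m]

lemma psd_quad_two {S : Matrix m m ℝ} (hS : S.PosSemidef) (i j : m) (ε : ℝ) :
    0 ≤ S i i + ε * (S i j + S j i) + ε ^ 2 * S j j := by
  have h := hS.dotProduct_mulVec_nonneg (fun k => (if k = i then (1:ℝ) else 0) + ε * (if k = j then 1 else 0))
  rw [star_trivial] at h
  have hv : ∀ k, (S *ᵥ (fun k => (if k = i then (1:ℝ) else 0) + ε * (if k = j then 1 else 0))) k
      = S k i + ε * S k j := by
    intro k
    simp [Matrix.mulVec, dotProduct, mul_add, mul_ite, Finset.sum_add_distrib,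
      Finset.mul_sum, mul_comm, mul_left_comm]
  rw [show (S *ᵥ (fun k => (if k = i then (1:ℝ) else 0) + ε * (if k = j then 1 else 0)))
      = fun k => S k i + ε * S k j from funext hv] at h
  have : (fun k => (if k = i then (1:ℝ) else 0) + ε * (if k = j then 1 else 0)) ⬝ᵥ
      (fun k => S k i + ε * S k j)
      = S i i + ε * (S i j + S j i) + ε ^ 2 * S j j := by
    simp [dotProduct, add_mul, ite_mul, Finset.sum_add_distrib]
    ring
  rw [this] at h
  exact h

lemma psd_abs_entry {S : Matrix m m ℝ} (hS : S.PosSemidef) (i j : m) :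
    |S i j| ≤ max (S i i) (S j j) := by
  have hsym : S j i = S i j := by
    have := hS.1
    rw [Matrix.IsHermitian] at this
    conv_lhs => rw [← this]
    simp [Matrix.conjTranspose_apply]
  by_cases hij : i = j
  · subst hij
    have h0 := psd_quad_two hS i i 0
    simp at h0
    rw [abs_of_nonneg (by linarith)]
    exact le_max_left _ _
  have h1 := psd_quad_two hS i j 1
  have h2 := psd_quad_two hS i j (-1)
  rw [hsym] at h1 h2
  have : |S i j| ≤ (S i i + S j j) / 2 := by
    rw [abs_le]; constructor <;> nlinarith
  calc |S i j| ≤ (S i i + S j j) / 2 := this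
    _ ≤ max (S i i) (S j j) := by
      rcases le_total (S i i) (S j j) with h | h
      · rw [max_eq_right h]; linarith
      · rw [max_eq_left h]; linarith

end aux3

/-- If `A` is SPSD, `J` has cardinality `r < n`, `A(J,J)` is invertible and
`J` maximizes `|det A(Ĵ,Ĵ)|` over all index sets `Ĵ` of cardinality `r`, then
`‖A - A_J‖_max ≤ (r+1) σ_{r+1}(A)` (0-based index `r` of the nonincreasingly sorted
eigenvalues). -/
theorem cross_approx_maxNorm_of_max_volume {n r : ℕ} (hrn : r < n)
    (A : Matrix (Fin n) (Fin n) ℝ) (hA : A.PosSemidef)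
    (J : Finset (Fin n)) (hJcard : J.card = r) (hJinv : pminor A J ≠ 0)
    (hmax : ∀ K : Finset (Fin n), K.card = r → |pminor A K| ≤ |pminor A J|) :
    maxNorm (A - crossApprox A J) ≤ (r + 1 : ℝ) * sortedDesc hA.1.eigenvalues ⟨r, hrn⟩ := by
  classical
  have hn0 : 0 < n := lt_of_le_of_lt (Nat.zero_le r) hrn
  haveI : Nonempty (Fin n) := ⟨⟨0, hn0⟩⟩
  set f := hA.1.eigenvalues with hf
  set σ : Equiv.Perm (Fin n) := Tuple.sort (fun j => -f j) with hσ
  have hdval : sortedDesc hA.1.eigenvalues ⟨r, hrn⟩ = f (σ ⟨r, hrn⟩) := by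
    simp [sortedDesc]
    rfl
  set d := f (σ ⟨r, hrn⟩) with hdd
  rw [hdval]
  set S := A - crossApprox A J with hSdef
  have hd0 : (0:ℝ) ≤ d := hA.eigenvalues_nonneg _
  have hRHS0 : (0:ℝ) ≤ (r+1:ℝ)*d := by positivity
  -- selection matrix and basic identities
  have hAsym : Aᵀ = A := by
    rw [← Matrix.conjTranspose_eq_transpose_of_trivial]; exact hA.1
  set C := A.submatrix (Subtype.val : J → Fin n) (Subtype.val : J → Fin n) with hCdef
  have hCpsd : C.PosSemidef := hA.submatrix _
  have hdetC : C.det = pminor A J := rfl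
  have hdetCne : C.det ≠ 0 := hJinv
  have hdetCnn : 0 ≤ C.det := by
    rw [hCpsd.1.det_eq_prod_eigenvalues]
    exact Finset.prod_nonneg fun i _ => by simpa using hCpsd.eigenvalues_nonneg i
  have hdetCpos : 0 < C.det := lt_of_le_of_ne hdetCnn (Ne.symm hdetCne)
  have hCunit : IsUnit C.det := isUnit_iff_ne_zero.mpr hdetCne
  have hCC : C * C⁻¹ = 1 := Matrix.mul_nonsing_inv _ hCunit
  have hC'C : C⁻¹ * C = 1 := Matrix.nonsing_inv_mul _ hCunit
  have hCi : C⁻¹ᵀ = C⁻¹ := by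
    rw [Matrix.transpose_nonsing_inv]
    congr 1
    rw [← Matrix.conjTranspose_eq_transpose_of_trivial]; exact hCpsd.1
  set Esel : Matrix (Fin n) J ℝ :=
    Matrix.of (fun k (j : J) => if k = (j : Fin n) then (1:ℝ) else 0) with hEdef
  have hAE : A.submatrix id (Subtype.val : J → Fin n) = A * Esel := by
    ext k j
    simp [Matrix.mul_apply, hEdef, mul_ite]
  have hEA : A.submatrix (Subtype.val : J → Fin n) id = Eselᵀ * A := by
    ext j k
    simp [Matrix.mul_apply, hEdef, ite_mul]
  have hEAE : Eselᵀ * A * Esel = C := by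
    rw [← hEA]
    ext p q
    simp [Matrix.mul_apply, hEdef, mul_ite, hCdef]
  have hEAE1 : Eselᵀ * (A * Esel) = C := by rw [← Matrix.mul_assoc, hEAE]
  set Q := Esel * C⁻¹ * Eselᵀ with hQdef
  have hQsym : Qᵀ = Q := by
    rw [hQdef, Matrix.transpose_mul, Matrix.transpose_mul, hCi, Matrix.transpose_transpose,
      Matrix.mul_assoc]
  have hEAEX : ∀ X : Matrix J (Fin n) ℝ, Eselᵀ*(A*(Esel*X)) = C*X := fun X => by
    rw [← Matrix.mul_assoc, ← Matrix.mul_assoc, hEAE]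
  have hcross : crossApprox A J = A * Q * A := by
    rw [crossApprox, hAE, hEA, ← hCdef, hQdef]
    simp only [Matrix.mul_assoc]
  have hQAQ : Q * A * Q = Q := by
    rw [hQdef]
    simp only [Matrix.mul_assoc]
    rw [hEAEX, ← Matrix.mul_assoc C⁻¹ C (C⁻¹*Eselᵀ), hC'C, Matrix.one_mul]
  have h5 : A*Q*A*Q*A = A*Q*A := by
    calc A*Q*A*Q*A = A*(Q*A*Q)*A := by noncomm_ring
      _ = A*Q*A := by rw [hQAQ]
  have hSNAN : (1 - Q*A)ᵀ * A * (1 - Q*A) = S := by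
    rw [Matrix.transpose_sub, Matrix.transpose_one, Matrix.transpose_mul, hQsym, hAsym]
    rw [hSdef, hcross]
    calc (1 - A*Q) * A * (1 - Q*A) = A - A*Q*A - (A*Q*A - A*Q*A*Q*A) := by noncomm_ring
      _ = A - A*Q*A := by rw [h5, sub_self, sub_zero]
  have hSpsd : S.PosSemidef := by
    rw [← hSNAN, ← Matrix.conjTranspose_eq_transpose_of_trivial]
    exact hA.conjTranspose_mul_mul_same _
  have hSE : S * Esel = 0 := by
    rw [hSdef, hcross, Matrix.sub_mul]
    have h6 : A*Q*A*Esel = A*Esel := by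
      calc A*Q*A*Esel = A*(Esel*(C⁻¹*(Eselᵀ*(A*Esel)))) := by
            rw [hQdef]; simp only [Matrix.mul_assoc]
        _ = A*(Esel*(C⁻¹*C)) := by rw [hEAE1]
        _ = A*Esel := by rw [hC'C, Matrix.mul_one]
    rw [h6, sub_self]
  have hScol : ∀ i k : Fin n, k ∈ J → S i k = 0 := by
    intro i k hk
    have := congr_fun (congr_fun hSE i) ⟨k, hk⟩
    simpa [Matrix.mul_apply, hEdef, mul_ite] using this
  have hdiag : ∀ k : Fin n, k ∉ J → S k k ≤ (r+1:ℝ)*d := by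
    intro k hk
    set K : Finset (Fin n) := insert k J with hKdef
    have hkK : k ∈ K := Finset.mem_insert_self _ _
    have hKcard : K.card = r + 1 := by rw [hKdef, Finset.card_insert_of_notMem hk, hJcard]
    set B := A.submatrix (Subtype.val : K → Fin n) (Subtype.val : K → Fin n) with hBdef
    have hBpsd : B.PosSemidef := hA.submatrix _
    set μ := hBpsd.1.eigenvalues with hμ
    have hμnn : ∀ i, 0 ≤ μ i := fun i => hBpsd.eigenvalues_nonneg i
    -- the sorted eigenvalue bound
    set T : Finset (Fin n) := (Finset.Iio (⟨r, hrn⟩ : Fin n)).image σ with hTdef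
    have hTcard : T.card = r := by
      rw [hTdef, Finset.card_image_of_injective _ σ.injective, Fin.card_Iio]
    have hfT : ∀ t, t ∉ T → f t ≤ d := by
      intro t ht
      have hkey := Tuple.monotone_sort (fun j => -f j)
      have hmem : σ.symm t ∉ Finset.Iio (⟨r, hrn⟩ : Fin n) := by
        intro hmem
        exact ht (Finset.mem_image.mpr ⟨σ.symm t, hmem, σ.apply_symm_apply t⟩)
      have hge : (⟨r, hrn⟩ : Fin n) ≤ σ.symm t := by
        simpa [Finset.mem_Iio, not_lt] using hmem
      have h2 := hkey hge
      simp only [Function.comp_apply, ← hσ, Equiv.apply_symm_apply, neg_le_neg_iff] at h2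
      rw [hdd]
      linarith
    -- kernel vector supported on K, orthogonal to top eigenvectors
    set U := (hA.1.eigenvectorUnitary : Matrix (Fin n) (Fin n) ℝ) with hUdef
    obtain ⟨y, hy0, hyker⟩ := exists_kernel_vec
      ((star U).submatrix (Subtype.val : T → Fin n) (Subtype.val : K → Fin n))
      (by rw [Fintype.card_coe, Fintype.card_coe, hTcard, hKcard]; omega)
    set x : Fin n → ℝ := fun a => if h : a ∈ K then y ⟨a, h⟩ else 0 with hxdef
    have hxw : ∀ w : Fin n → ℝ, ∑ a, w a * x a = ∑ kk : K, w kk.1 * y kk := by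
      intro w
      have := sum_mul_restrict K y w
      rw [← this]
    have hxmem : ∀ kk : K, x kk.1 = y kk := by
      intro kk; rw [hxdef]; simp [kk.2]
    have hxx : x ⬝ᵥ x = y ⬝ᵥ y := by
      rw [dotProduct, dotProduct, hxw x]
      exact Finset.sum_congr rfl fun kk _ => by rw [hxmem kk]
    have hAv : ∀ a, (A *ᵥ x) a = ∑ kk : K, A a kk.1 * y kk := fun a => hxw (A a)
    have hxAx : x ⬝ᵥ (A *ᵥ x) = y ⬝ᵥ (B *ᵥ y) := by
      rw [dotProduct, dotProduct]
      have h1 : ∀ a, x a * (A *ᵥ x) a = (A *ᵥ x) a * x a := fun a => mul_comm _ _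
      rw [Finset.sum_congr rfl fun a _ => h1 a, hxw (A *ᵥ x)]
      refine Finset.sum_congr rfl fun kk _ => ?_
      rw [hAv kk.1, Matrix.mulVec, dotProduct]
      rw [mul_comm]
      congr 1
    have hconstraint : ∀ t ∈ T, (star U *ᵥ x) t = 0 := by
      intro t ht
      have h2 := congr_fun hyker ⟨t, ht⟩
      rw [Matrix.mulVec, dotProduct] at h2 ⊢
      rw [hxw fun a => (star U) t a]
      simpa using h2
    have hyy0 : 0 < y ⬝ᵥ y := by
      rw [dotProduct]
      have hex : ∃ kk, y kk ≠ 0 := by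
        by_contra hno; push_neg at hno; exact hy0 (funext hno)
      obtain ⟨kk, hkk⟩ := hex
      exact Finset.sum_pos' (fun i _ => mul_self_nonneg _)
        ⟨kk, Finset.mem_univ _, mul_self_pos.mpr hkk⟩
    obtain ⟨i0, -, hi0⟩ := Finset.exists_min_image (Finset.univ : Finset K) μ
      ⟨⟨k, hkK⟩, Finset.mem_univ _⟩
    have hup : x ⬝ᵥ (A *ᵥ x) ≤ d * (x ⬝ᵥ x) :=
      quad_upper hA.1 x d T hconstraint (fun i hi => hfT i hi)
    have hlow : μ i0 * (y ⬝ᵥ y) ≤ y ⬝ᵥ (B *ᵥ y) :=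
      quad_lower hBpsd.1 y (μ i0) (fun i => hi0 i (Finset.mem_univ i))
    have hμ0d : μ i0 ≤ d := by
      have h1 : μ i0 * (y ⬝ᵥ y) ≤ d * (y ⬝ᵥ y) := by
        calc μ i0 * (y ⬝ᵥ y) ≤ y ⬝ᵥ (B *ᵥ y) := hlow
          _ = x ⬝ᵥ (A *ᵥ x) := hxAx.symm
          _ ≤ d * (x ⬝ᵥ x) := hup
          _ = d * (y ⬝ᵥ y) := by rw [hxx]
      exact le_of_mul_le_mul_right h1 hyy0
    -- Schur determinant identity : B.det = C.det * S k k
    have hJK : ∀ j : Fin n, j ∈ J → j ∈ K := fun j hj => Finset.mem_insert_of_mem hj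
    set eK : Unit ⊕ J ≃ K :=
      { toFun := Sum.elim (fun _ => ⟨k, hkK⟩) (fun j => ⟨j.1, hJK j.1 j.2⟩),
        invFun := fun z => if h : z.1 ∈ J then Sum.inr ⟨z.1, h⟩ else Sum.inl (),
        left_inv := by
          rintro (⟨⟩ | ⟨j, hj⟩)
          · simp [hk]
          · simp [hj]
        right_inv := by
          intro z
          by_cases h : z.1 ∈ J
          · simp only [h, dif_pos]
            rfl
          · have hzk : z.1 = k := by
              rcases Finset.mem_insert.mp z.2 with h1 | h1
              · exact h1
              · exact absurd h1 h
            simp only [h, dif_neg, not_false_iff]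
            exact Subtype.ext hzk.symm } with heK
    haveI : Invertible C := C.invertibleOfIsUnitDet hCunit
    have hBblocks : B.submatrix eK eK = Matrix.fromBlocks
        (Matrix.of fun (_ _ : Unit) => A k k)
        (Matrix.of fun (_ : Unit) (q : J) => A k q.1)
        (Matrix.of fun (p : J) (_ : Unit) => A p.1 k)
        C := by
      ext a b
      rcases a with a | p <;> rcases b with b | q <;>
        simp [heK, hCdef, Matrix.fromBlocks] <;> rfl
    have hdet1 : B.det = C.det *
        ((Matrix.of fun (_ _ : Unit) => A k k)
          - (Matrix.of fun (_ : Unit) (q : J) => A k q.1) * C⁻¹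
            * (Matrix.of fun (p : J) (_ : Unit) => A p.1 k)).det := by
      rw [← Matrix.det_submatrix_equiv_self eK B, hBblocks, Matrix.det_fromBlocks₂₂,
        Matrix.invOf_eq_nonsing_inv]
    have hcrossEntry : crossApprox A J k k
        = ∑ q : J, (∑ p : J, A k p.1 * C⁻¹ p q) * A q.1 k := by
      rw [crossApprox, ← hCdef]
      simp [Matrix.mul_apply]
    have hdetB : B.det = C.det * S k k := by
      rw [hdet1, hSdef, Matrix.sub_apply, hcrossEntry]
      congr 1
      rw [Matrix.det_unique]
      simp [Matrix.mul_apply, Matrix.sub_apply]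
    -- trace of the adjugate is the sum of the r × r principal minors of B
    have hadj : (Matrix.adjugate B).trace = ∑ j : K, pminor A (K.erase j.1) := by
      rw [Matrix.trace]
      refine Finset.sum_congr rfl fun j _ => ?_
      rw [Matrix.diag]
      rw [adjugate_diag B j]
      let e2 : {z : K // z ≠ j} ≃ {z // z ∈ K.erase j.1} :=
        { toFun := fun z => ⟨z.1.1,
            Finset.mem_erase.mpr ⟨fun hh => z.2 (Subtype.ext hh), z.1.2⟩⟩,
          invFun := fun w => ⟨⟨w.1, Finset.mem_of_mem_erase w.2⟩,
            fun hh => (Finset.ne_of_mem_erase w.2) (congrArg Subtype.val hh)⟩,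
          left_inv := fun z => by apply Subtype.ext; apply Subtype.ext; rfl,
          right_inv := fun w => by apply Subtype.ext; rfl }
      rw [pminor, ← Matrix.det_submatrix_equiv_self e2]
      rfl
    have hminor : ∀ j : K, pminor A (K.erase j.1) ≤ C.det := by
      intro j
      have hcard : (K.erase j.1).card = r := by
        rw [Finset.card_erase_of_mem j.2, hKcard]
        omega
      calc pminor A (K.erase j.1) ≤ |pminor A (K.erase j.1)| := le_abs_self _
        _ ≤ |pminor A J| := hmax _ hcard
        _ = C.det := by rw [← hdetC, abs_of_pos hdetCpos]
    have hsum : ∑ j : K, pminor A (K.erase j.1) ≤ (r+1:ℝ) * C.det := by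
      calc ∑ j : K, pminor A (K.erase j.1) ≤ ∑ _j : K, C.det :=
            Finset.sum_le_sum (fun j _ => hminor j)
        _ = (r+1:ℝ) * C.det := by
          rw [Finset.sum_const, Finset.card_univ, Fintype.card_coe, hKcard, nsmul_eq_mul]
          push_cast
          ring
    by_cases hB0 : B.det = 0
    · have hS0 : S k k = 0 := by
        rw [hB0] at hdetB
        rcases mul_eq_zero.mp hdetB.symm with h | h
        · exact absurd h hdetCne
        · exact h
      rw [hS0]
      exact hRHS0
    · have hdetBμ : B.det = ∏ i, μ i := by
        rw [hBpsd.1.det_eq_prod_eigenvalues]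
        norm_num
        rfl
      have hμpos : ∀ i, 0 < μ i := by
        intro i
        rcases (hμnn i).lt_or_eq with h | h
        · exact h
        · exact absurd (hdetBμ.trans (Finset.prod_eq_zero (Finset.mem_univ i) h.symm)) hB0
      have htr : B⁻¹.trace = ∑ i, (μ i)⁻¹ := trace_inv_herm hBpsd.1 (fun i => (hμpos i).ne')
      have htrge : (μ i0)⁻¹ ≤ B⁻¹.trace := by
        rw [htr]
        exact Finset.single_le_sum (fun i _ => inv_nonneg.mpr (hμnn i)) (Finset.mem_univ i0)
      have hadjtr : (Matrix.adjugate B).trace = B.det * B⁻¹.trace := by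
        have hBinv : B⁻¹ = Ring.inverse B.det • Matrix.adjugate B := Matrix.inv_def B
        rw [hBinv, Matrix.trace_smul, Ring.inverse_eq_inv', smul_eq_mul, ← mul_assoc,
          mul_inv_cancel₀ hB0, one_mul]
      have hdetBpos : 0 < B.det := by
        rw [hdetBμ]
        exact Finset.prod_pos (fun i _ => hμpos i)
      have hchain : B.det * (μ i0)⁻¹ ≤ (r+1:ℝ) * C.det := by
        calc B.det * (μ i0)⁻¹ ≤ B.det * B⁻¹.trace :=
              mul_le_mul_of_nonneg_left htrge (le_of_lt hdetBpos)
          _ = (Matrix.adjugate B).trace := hadjtr.symm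
          _ = ∑ j : K, pminor A (K.erase j.1) := hadj
          _ ≤ (r+1:ℝ) * C.det := hsum
      have hSkk2 : S k k ≤ (r+1:ℝ) * μ i0 := by
        have h1 : B.det ≤ (r+1:ℝ) * C.det * μ i0 := by
          have h2 := mul_le_mul_of_nonneg_right hchain (le_of_lt (hμpos i0))
          rwa [mul_assoc, inv_mul_cancel₀ (hμpos i0).ne', mul_one] at h2
        have h2 : C.det * S k k ≤ C.det * ((r+1:ℝ) * μ i0) := by
          rw [← hdetB]
          calc B.det ≤ (r+1:ℝ)*C.det*μ i0 := h1
            _ = C.det * ((r+1:ℝ)*μ i0) := by ring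
        exact le_of_mul_le_mul_left h2 hdetCpos
      calc S k k ≤ (r+1:ℝ) * μ i0 := hSkk2
        _ ≤ (r+1:ℝ) * d := by
          apply mul_le_mul_of_nonneg_left hμ0d
          positivity
  have hdiagall : ∀ k, S k k ≤ (r+1:ℝ)*d := by
    intro k; by_cases hk : k ∈ J
    · rw [hScol k k hk]; exact hRHS0
    · exact hdiag k hk
  show maxNorm S ≤ (r+1:ℝ)*d
  rw [maxNorm]
  refine ciSup_le fun i => ciSup_le fun j => ?_
  calc |S i j| ≤ max (S i i) (S j j) := psd_abs_entry hSpsd i j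
    _ ≤ (r+1:ℝ)*d := max_le (hdiagall i) (hdiagall j)
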